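/- arXiv:2205.07163 — 4 statements merged into one kernel-verified Lean document; each statement's English description precedes it below -/
import Mathlib

section
/- For every integer m ≥ 1 and all complex numbers y₁, …, y_m and w, the complete Bell polynomials satisfy Y_m(y₁ − w, y₂ − w²/2, y₃ − w³/3, …, y_m − w^m/m) = Y_m(y₁, …, y_m) − w·Y_{m−1}(y₁, …, y_{m−1}). -/
open MeasureTheory Filter Set Topology

/-- Complete Bell polynomial `Y_m(y₁, …, y_m) = Σ ∏_{j=1}^m y_j^{k_j}/k_j!`, the sum over
all non-negative integers `k₁, …, k_m` with `k₁ + 2k₂ + ⋯ + m·k_m = m`. -/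
noncomputable def bellY (m : ℕ) (y : ℕ → ℂ) : ℂ :=
  ∑ k ∈ (Fintype.piFinset fun _ : Fin m => Finset.range (m + 1)).filter
      (fun k => ∑ j : Fin m, ((j : ℕ) + 1) * k j = m),
    ∏ j : Fin m, y ((j : ℕ) + 1) ^ (k j) / ((k j).factorial : ℂ)

open PowerSeries Finset

/-- `E c k = exp (c X^k)` as a formal power series. -/
noncomputable def bellE (c : ℂ) (k : ℕ) : PowerSeries ℂ :=
  PowerSeries.mk fun d => if k ∣ d then c ^ (d / k) / ((d / k).factorial : ℂ) else 0

lemma coeff_bellE (c : ℂ) (k d : ℕ) :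
    PowerSeries.coeff d (bellE c k) =
      if k ∣ d then c ^ (d / k) / ((d / k).factorial : ℂ) else 0 :=
  coeff_mk _ _

lemma coeff_zero_bellE (c : ℂ) (k : ℕ) : PowerSeries.coeff 0 (bellE c k) = 1 := by
  rw [coeff_bellE, if_pos (dvd_zero k)]
  simp

lemma bellE_mul (a b : ℂ) (k : ℕ) (hk : k ≠ 0) :
    bellE a k * bellE b k = bellE (a + b) k := by
  have hk0 : 0 < k := Nat.pos_of_ne_zero hk
  ext n
  rw [PowerSeries.coeff_mul, coeff_bellE]
  by_cases hn : k ∣ n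
  · obtain ⟨q, rfl⟩ := hn
    rw [if_pos (dvd_mul_right k q), Nat.mul_div_cancel_left q hk0]
    have hsub : (Finset.HasAntidiagonal.antidiagonal q).image (fun p => (k * p.1, k * p.2)) ⊆
        Finset.HasAntidiagonal.antidiagonal (k * q) := by
      intro p hp
      simp only [Finset.mem_image, Finset.HasAntidiagonal.mem_antidiagonal] at hp ⊢
      obtain ⟨r, hr, rfl⟩ := hp
      rw [← Nat.mul_add, hr]
    have hzero : ∀ p ∈ Finset.HasAntidiagonal.antidiagonal (k * q),
        p ∉ (Finset.HasAntidiagonal.antidiagonal q).image (fun p => (k * p.1, k * p.2)) →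
        PowerSeries.coeff p.1 (bellE a k) * PowerSeries.coeff p.2 (bellE b k) = 0 := by
      rintro ⟨u, v⟩ hp hnp
      simp only [Finset.HasAntidiagonal.mem_antidiagonal] at hp
      by_cases hu : k ∣ u
      · by_cases hv : k ∣ v
        · exfalso
          apply hnp
          obtain ⟨i, rfl⟩ := hu
          obtain ⟨j, rfl⟩ := hv
          simp only [Finset.mem_image, Finset.HasAntidiagonal.mem_antidiagonal, Prod.mk.injEq]
          refine ⟨(i, j), ?_, rfl, rfl⟩
          have : k * (i + j) = k * q := by rw [Nat.mul_add, hp]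
          exact Nat.eq_of_mul_eq_mul_left hk0 this
        · rw [coeff_bellE b, if_neg hv, mul_zero]
      · rw [coeff_bellE a, if_neg hu, zero_mul]
    rw [← Finset.sum_subset hsub hzero]
    rw [Finset.sum_image (by
      rintro ⟨i, j⟩ _ ⟨i', j'⟩ _ h
      simp only [Prod.mk.injEq] at h ⊢
      exact ⟨Nat.eq_of_mul_eq_mul_left hk0 h.1, Nat.eq_of_mul_eq_mul_left hk0 h.2⟩)]
    have hterm : ∀ p ∈ Finset.HasAntidiagonal.antidiagonal q,
        PowerSeries.coeff (k * p.1) (bellE a k) * PowerSeries.coeff (k * p.2) (bellE b k)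
          = a ^ p.1 / (p.1.factorial : ℂ) * (b ^ p.2 / (p.2.factorial : ℂ)) := by
      rintro ⟨i, j⟩ _
      rw [coeff_bellE, coeff_bellE, if_pos (dvd_mul_right k i), if_pos (dvd_mul_right k j),
        Nat.mul_div_cancel_left i hk0, Nat.mul_div_cancel_left j hk0]
    rw [Finset.sum_congr rfl hterm]
    rw [Finset.Nat.sum_antidiagonal_eq_sum_range_succ_mk]
    have hkey : ∀ i ∈ Finset.range (q + 1),
        a ^ i / (i.factorial : ℂ) * (b ^ (q - i) / ((q - i).factorial : ℂ))
          = a ^ i * b ^ (q - i) * (q.choose i : ℂ) / (q.factorial : ℂ) := by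
      intro i hi
      rw [Finset.mem_range, Nat.lt_succ_iff] at hi
      have h := Nat.choose_mul_factorial_mul_factorial hi
      have h1 : (i.factorial : ℂ) ≠ 0 := Nat.cast_ne_zero.mpr (Nat.factorial_ne_zero i)
      have h2 : ((q - i).factorial : ℂ) ≠ 0 := Nat.cast_ne_zero.mpr (Nat.factorial_ne_zero _)
      have h3 : (q.factorial : ℂ) ≠ 0 := Nat.cast_ne_zero.mpr (Nat.factorial_ne_zero q)
      field_simp
      have : ((q.choose i : ℕ) : ℂ) * (i.factorial : ℂ) * ((q - i).factorial : ℂ)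
          = (q.factorial : ℂ) := by
        push_cast [← h]
        ring
      rw [← this]
      ring
    rw [Finset.sum_congr rfl hkey, ← Finset.sum_div, ← add_pow]
  · rw [if_neg hn]
    apply Finset.sum_eq_zero
    rintro ⟨u, v⟩ hp
    simp only [Finset.HasAntidiagonal.mem_antidiagonal] at hp
    by_cases hu : k ∣ u
    · have hv : ¬ k ∣ v := fun hv => hn (hp ▸ Nat.dvd_add hu hv)
      rw [coeff_bellE b, if_neg hv, mul_zero]
    · rw [coeff_bellE a, if_neg hu, zero_mul]

lemma bellE_deriv (c : ℂ) (k : ℕ) (hk : k ≠ 0) :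
    (bellE c k).derivativeFun =
      (PowerSeries.C ((k : ℂ) * c) * X ^ (k - 1)) * bellE c k := by
  have hk0 : 0 < k := Nat.pos_of_ne_zero hk
  ext n
  erw [coeff_derivativeFun, mul_assoc, PowerSeries.coeff_C_mul, PowerSeries.coeff_X_pow_mul']
  by_cases hd : k ∣ n + 1
  · obtain ⟨q, hq⟩ := hd
    have hq0 : q ≠ 0 := by
      rintro rfl
      simp at hq
    obtain ⟨q', rfl⟩ : ∃ q', q = q' + 1 := ⟨q - 1, by omega⟩
    have hle : k - 1 ≤ n := by
      have : k ≤ n + 1 := by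
        calc k = k * 1 := (Nat.mul_one k).symm
        _ ≤ k * (q' + 1) := Nat.mul_le_mul_left k (by omega)
        _ = n + 1 := hq.symm
      omega
    rw [if_pos hle]
    have hkq : n + 1 = k * q' + k := by rw [hq]; ring
    have hnk : n - (k - 1) = k * q' := by omega
    rw [hnk, coeff_bellE, coeff_bellE, if_pos ⟨q' + 1, hq⟩, if_pos (dvd_mul_right k q'),
      Nat.mul_div_cancel_left q' hk0, hq, Nat.mul_div_cancel_left _ hk0]
    have h1 : ((q' + 1).factorial : ℂ) ≠ 0 := Nat.cast_ne_zero.mpr (Nat.factorial_ne_zero _)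
    have h2 : ((q').factorial : ℂ) ≠ 0 := Nat.cast_ne_zero.mpr (Nat.factorial_ne_zero _)
    have hn : ((n : ℂ) + 1) = (k : ℂ) * ((q' : ℂ) + 1) := by
      exact_mod_cast congrArg (fun t : ℕ => (t : ℂ)) hq
    have h3 : ((q' : ℂ) + 1) ≠ 0 := Nat.cast_add_one_ne_zero q'
    rw [hn, Nat.factorial_succ]
    push_cast
    field_simp
    ring
  · rw [coeff_bellE, if_neg hd, zero_mul]
    split_ifs with hle
    · rw [coeff_bellE, if_neg, mul_zero]
      intro hdvd
      apply hd
      have : n + 1 = (n - (k - 1)) + k := by omega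
      rw [this]
      exact Nat.dvd_add hdvd dvd_rfl
    · rw [mul_zero]

lemma deriv_prod (s : Finset ℕ) (f g : ℕ → PowerSeries ℂ)
    (h : ∀ j ∈ s, (f j).derivativeFun = g j * f j) :
    (∏ j ∈ s, f j).derivativeFun = (∑ j ∈ s, g j) * ∏ j ∈ s, f j := by
  classical
  induction s using Finset.induction with
  | empty => simp [derivativeFun_one]
  | insert _ _ hx ih =>
    rename_i a s
    rw [Finset.prod_insert hx, Finset.sum_insert hx, derivativeFun_mul,
      ih (fun j hj => h j (Finset.mem_insert_of_mem hj)),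
      h a (Finset.mem_insert_self a s)]
    simp only [smul_eq_mul]
    ring

lemma telescope (w : ℂ) (m : ℕ) :
    (1 - PowerSeries.C w * X) *
        (∑ j ∈ Finset.range m, (PowerSeries.C w) ^ (j + 1) * X ^ j)
      = PowerSeries.C w - (PowerSeries.C w) ^ (m + 1) * X ^ m := by
  induction m with
  | zero => simp
  | succ m ih =>
    rw [Finset.sum_range_succ, mul_add, ih]
    ring

/-- key congruence: `(1 - wX) * ∏_{k=1}^m exp(w^k X^k / k) ≡ 1 mod X^(m+1)`. -/
lemma key_dvd (w : ℂ) (m : ℕ) :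
    (X : PowerSeries ℂ) ^ (m + 1) ∣
      (1 - PowerSeries.C w * X) *
        (∏ j ∈ Finset.range m, bellE (w ^ (j + 1) / ((j : ℂ) + 1)) (j + 1)) - 1 := by
  set G := ∏ j ∈ Finset.range m, bellE (w ^ (j + 1) / ((j : ℂ) + 1)) (j + 1) with hG
  set P := (1 - PowerSeries.C w * X) * G with hP
  have hG' : G.derivativeFun
      = (∑ j ∈ Finset.range m, (PowerSeries.C w) ^ (j + 1) * X ^ j) * G := by
    rw [hG]
    apply deriv_prod
    intro j _
    rw [bellE_deriv _ _ (Nat.succ_ne_zero j)]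
    have h1 : ((j + 1 : ℕ) : ℂ) * (w ^ (j + 1) / ((j : ℂ) + 1)) = w ^ (j + 1) := by
      have hj : ((j : ℂ) + 1) ≠ 0 := Nat.cast_add_one_ne_zero j
      push_cast
      field_simp
    rw [h1, map_pow, Nat.succ_sub_one]
  have hone : derivativeFun (1 - PowerSeries.C w * X : PowerSeries ℂ)
      = - PowerSeries.C w := by
    ext n
    erw [coeff_derivativeFun]
    simp only [map_sub, map_neg, PowerSeries.coeff_one, PowerSeries.coeff_C_mul,
      PowerSeries.coeff_X, PowerSeries.coeff_C]
    rcases n with _ | n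
    · simp
    · simp
  have hP' : P.derivativeFun = X ^ m * (-(PowerSeries.C w) ^ (m + 1) * G) := by
    rw [hP, derivativeFun_mul, hG', hone]
    simp only [smul_eq_mul]
    have : (1 - PowerSeries.C w * X) *
        ((∑ j ∈ Finset.range m, (PowerSeries.C w) ^ (j + 1) * X ^ j) * G)
        = ((1 - PowerSeries.C w * X) *
            (∑ j ∈ Finset.range m, (PowerSeries.C w) ^ (j + 1) * X ^ j)) * G := by ring
    rw [this, telescope]
    ring
  have hdvd : (X : PowerSeries ℂ) ^ m ∣ P.derivativeFun := ⟨_, hP'⟩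
  rw [PowerSeries.X_pow_dvd_iff]
  intro i hi
  rw [map_sub]
  rcases i with _ | i
  · have hcc : ∀ (c : ℂ) (k : ℕ), PowerSeries.constantCoeff (bellE c k) = 1 := by
      intro c k
      rw [← PowerSeries.coeff_zero_eq_constantCoeff_apply, coeff_zero_bellE]
    have h0 : PowerSeries.coeff 0 P = 1 := by
      rw [PowerSeries.coeff_zero_eq_constantCoeff_apply, hP, map_mul, map_sub, map_one,
        map_mul, PowerSeries.constantCoeff_X, mul_zero, sub_zero, one_mul, hG, map_prod]
      exact Finset.prod_eq_one (fun j _ => hcc _ _)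
    rw [h0]
    simp
  · have hi' : i < m := by omega
    have hz : PowerSeries.coeff i P.derivativeFun = 0 :=
      PowerSeries.X_pow_dvd_iff.mp hdvd i hi'
    erw [coeff_derivativeFun] at hz
    have hne : ((i : ℂ) + 1) ≠ 0 := Nat.cast_add_one_ne_zero i
    have : PowerSeries.coeff (i + 1) P = 0 := by
      rcases mul_eq_zero.mp hz with h | h
      · exact h
      · exact absurd h hne
    rw [this]
    simp [PowerSeries.coeff_one]

/-- helper: the function `i ↦ (i+1) * k i` (extended by zero) as a finsupp -/
noncomputable def toL (d : ℕ) (k : Fin d → ℕ) : ℕ →₀ ℕ :=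
  Finsupp.onFinset (Finset.range d)
    (fun i => if h : i < d then (i + 1) * k ⟨i, h⟩ else 0)
    (fun a ha => by
      rw [Finset.mem_range]
      by_contra h
      exact ha (dif_neg h))

lemma toL_apply_lt (d : ℕ) (k : Fin d → ℕ) (i : ℕ) (h : i < d) :
    toL d k i = (i + 1) * k ⟨i, h⟩ := by
  simp [toL, Finsupp.onFinset_apply, dif_pos h]

lemma toL_apply_ge (d : ℕ) (k : Fin d → ℕ) (i : ℕ) (h : ¬ i < d) :
    toL d k i = 0 := by
  simp [toL, Finsupp.onFinset_apply, dif_neg h]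

lemma coeff_F (y : ℕ → ℂ) (m d : ℕ) (hdm : d ≤ m) :
    PowerSeries.coeff d (∏ j ∈ Finset.range m, bellE (y (j + 1)) (j + 1)) = bellY d y := by
  classical
  rw [PowerSeries.coeff_prod, bellY]
  rw [← Finset.sum_filter_of_ne
    (p := fun l : ℕ →₀ ℕ => ∀ i ∈ Finset.range m, (i + 1) ∣ l i)
    (fun l _ hne => by
      by_contra h
      have h' : ¬ ∀ i ∈ Finset.range m, (i + 1) ∣ l i := h
      push_neg at h'
      obtain ⟨i, hi, hdvd⟩ := h'
      exact hne (Finset.prod_eq_zero hi (by rw [coeff_bellE, if_neg hdvd])))]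
  symm
  apply Finset.sum_bij' (i := fun k _ => toL d k)
    (j := fun l _ => fun j : Fin d => l (j : ℕ) / ((j : ℕ) + 1))
  -- hi : forward map lands in target
  · intro k hk
    simp only [Finset.mem_filter, Fintype.mem_piFinset, Finset.mem_range] at hk
    obtain ⟨hk1, hk2⟩ := hk
    simp only [Finset.mem_filter, Finset.mem_finsuppAntidiag]
    refine ⟨⟨?_, ?_⟩, ?_⟩
    · -- sum = d
      have hsub : Finset.range d ⊆ Finset.range m := Finset.range_subset_range.mpr hdm
      rw [← Finset.sum_subset hsub (fun i _ hi => by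
        rw [toL_apply_ge d k i (by simpa [Finset.mem_range] using hi)])]
      rw [← Fin.sum_univ_eq_sum_range (fun i => toL d k i) d]
      calc ∑ j : Fin d, toL d k (j : ℕ)
          = ∑ j : Fin d, ((j : ℕ) + 1) * k j :=
            Finset.sum_congr rfl (fun j _ => toL_apply_lt d k (j : ℕ) j.isLt)
        _ = d := hk2
    · -- support ⊆ range m
      intro a ha
      have := Finsupp.mem_support_iff.mp ha
      rw [Finset.mem_range]
      by_contra h
      exact this (toL_apply_ge d k a (by omega))
    · -- divisibility
      intro i _
      by_cases h : i < d
      · rw [toL_apply_lt d k i h]; exact Dvd.intro _ rfl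
      · rw [toL_apply_ge d k i h]; exact dvd_zero _
  -- hj : backward map lands in source
  · intro l hl
    simp only [Finset.mem_filter, Finset.mem_finsuppAntidiag] at hl
    obtain ⟨⟨hsum, hsupp⟩, hdvd⟩ := hl
    simp only [Finset.mem_filter, Fintype.mem_piFinset, Finset.mem_range]
    constructor
    · intro j
      have hle0 : l (j : ℕ) ≤ ∑ i ∈ Finset.range m, l i :=
        Finset.single_le_sum (f := fun i => l i) (fun i _ => Nat.zero_le _)
          (Finset.mem_range.mpr (lt_of_lt_of_le j.isLt hdm))
      have hle : l (j : ℕ) ≤ d := le_of_le_of_eq hle0 hsum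
      calc l (j : ℕ) / ((j : ℕ) + 1) ≤ l (j : ℕ) := Nat.div_le_self _ _
      _ ≤ d := hle
      _ < d + 1 := Nat.lt_succ_self d
    · -- sum condition
      have htail : ∀ i ∈ Finset.range m, i ∉ Finset.range d → l i = 0 := by
        intro i him hid
        rw [Finset.mem_range] at him
        rw [Finset.mem_range, not_lt] at hid
        have hdv := hdvd i (Finset.mem_range.mpr him)
        have hle : l i ≤ d := by
          rw [← hsum]
          exact Finset.single_le_sum (f := fun i => l i) (fun i _ => Nat.zero_le _)
            (Finset.mem_range.mpr him)
        rcases Nat.eq_zero_or_pos (l i) with h | h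
        · exact h
        · exfalso
          have := Nat.le_of_dvd h hdv
          omega
      have hsum' : ∑ i ∈ Finset.range d, l i = d :=
        (Finset.sum_subset (Finset.range_subset_range.mpr hdm) htail).trans hsum
      have : ∀ j : Fin d, ((j : ℕ) + 1) * (l (j : ℕ) / ((j : ℕ) + 1)) = l (j : ℕ) := by
        intro j
        exact Nat.mul_div_cancel' (hdvd (j : ℕ)
          (Finset.mem_range.mpr (lt_of_lt_of_le j.isLt hdm)))
      rw [Finset.sum_congr rfl (fun j _ => this j)]
      rw [Fin.sum_univ_eq_sum_range (fun i => l i) d]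
      exact hsum'
  -- left_inv
  · intro k hk
    funext j
    rw [toL_apply_lt d k (j : ℕ) j.isLt]
    rw [Nat.mul_div_cancel_left _ (Nat.succ_pos _)]
  -- right_inv
  · intro l hl
    simp only [Finset.mem_filter, Finset.mem_finsuppAntidiag] at hl
    obtain ⟨⟨hsum, hsupp⟩, hdvd⟩ := hl
    ext i
    by_cases h : i < d
    · rw [toL_apply_lt d _ i h]
      exact Nat.mul_div_cancel' (hdvd i (Finset.mem_range.mpr (lt_of_lt_of_le h hdm)))
    · rw [toL_apply_ge d _ i h]
      by_cases him : i < m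
      · symm
        have hdv := hdvd i (Finset.mem_range.mpr him)
        have hle : l i ≤ d := by
          rw [← hsum]
          exact Finset.single_le_sum (f := fun i => l i) (fun i _ => Nat.zero_le _)
            (Finset.mem_range.mpr him)
        rcases Nat.eq_zero_or_pos (l i) with h0 | h0
        · exact h0
        · exfalso
          have := Nat.le_of_dvd h0 hdv
          omega
      · symm
        by_contra h0
        exact him (Finset.mem_range.mp (hsupp (Finsupp.mem_support_iff.mpr h0)))
  -- values agree
  · intro k hk
    simp only [Finset.mem_filter, Fintype.mem_piFinset, Finset.mem_range] at hk
    obtain ⟨hk1, hk2⟩ := hk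
    have hsub : Finset.range d ⊆ Finset.range m := Finset.range_subset_range.mpr hdm
    rw [← Finset.prod_subset hsub (fun i _ hi => by
      rw [toL_apply_ge d k i (by simpa [Finset.mem_range] using hi), coeff_zero_bellE])]
    rw [← Fin.prod_univ_eq_prod_range (fun i => PowerSeries.coeff (toL d k i)
      (bellE (y (i + 1)) (i + 1))) d]
    apply Finset.prod_congr rfl
    intro j _
    rw [toL_apply_lt d k (j : ℕ) j.isLt, coeff_bellE,
      if_pos (dvd_mul_right _ _), Nat.mul_div_cancel_left _ (Nat.succ_pos _)]

/-- **Shift identity for the complete Bell polynomials:**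
`Y_m(y₁ - w, y₂ - w²/2, …, y_m - w^m/m) = Y_m(y₁, …, y_m) - w·Y_{m-1}(y₁, …, y_{m-1})`. -/
theorem bellY_shift (m : ℕ) (hm : 1 ≤ m) (y : ℕ → ℂ) (w : ℂ) :
    bellY m (fun k => y k - w ^ k / (k : ℂ)) = bellY m y - w * bellY (m - 1) y := by
  classical
  set a : ℕ → ℂ := fun k => y k - w ^ k / (k : ℂ) with ha
  set Fy := ∏ j ∈ Finset.range m, bellE (y (j + 1)) (j + 1) with hFy
  set Fa := ∏ j ∈ Finset.range m, bellE (a (j + 1)) (j + 1) with hFa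
  set G := ∏ j ∈ Finset.range m, bellE (w ^ (j + 1) / ((j : ℂ) + 1)) (j + 1) with hG
  have hfact : Fy = Fa * G := by
    rw [hFy, hFa, hG, ← Finset.prod_mul_distrib]
    apply Finset.prod_congr rfl
    intro j _
    have harg : a (j + 1) + w ^ (j + 1) / ((j : ℂ) + 1) = y (j + 1) := by
      simp only [ha]
      push_cast
      ring
    rw [bellE_mul _ _ _ (Nat.succ_ne_zero j), harg]
  obtain ⟨T, hT⟩ := key_dvd w m
  -- (1 - C w X) * Fy = Fa + Fa * (X^(m+1) * T)
  have hmain : (1 - PowerSeries.C w * X) * Fy = Fa + Fa * (X ^ (m + 1) * T) := by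
    rw [hfact]
    have : (1 - PowerSeries.C w * X) * (Fa * G)
        = Fa * ((1 - PowerSeries.C w * X) * G) := by ring
    rw [this]
    have h1 : (1 - PowerSeries.C w * X) * G = 1 + X ^ (m + 1) * T := by
      have := hT
      linear_combination this
    rw [h1]
    ring
  obtain ⟨n, rfl⟩ : ∃ n, m = n + 1 := ⟨m - 1, by omega⟩
  have hcoeff : PowerSeries.coeff (n + 1) ((1 - PowerSeries.C w * X) * Fy)
      = PowerSeries.coeff (n + 1) Fa := by
    rw [hmain, map_add]
    have : PowerSeries.coeff (n + 1) (Fa * (X ^ (n + 1 + 1) * T)) = 0 := by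
      have hdvd : (X : PowerSeries ℂ) ^ (n + 1 + 1) ∣ Fa * (X ^ (n + 1 + 1) * T) :=
        ⟨Fa * T, by ring⟩
      exact PowerSeries.X_pow_dvd_iff.mp hdvd (n + 1) (Nat.lt_succ_self _)
    rw [this, add_zero]
  have hexp : (1 - PowerSeries.C w * X) * Fy = Fy - PowerSeries.C w * (X * Fy) := by
    ring
  rw [hexp, map_sub, PowerSeries.coeff_C_mul, PowerSeries.coeff_succ_X_mul] at hcoeff
  have e1 : PowerSeries.coeff (n + 1) Fa = bellY (n + 1) a := coeff_F a (n + 1) (n + 1) le_rfl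
  have e2 : PowerSeries.coeff (n + 1) Fy = bellY (n + 1) y := coeff_F y (n + 1) (n + 1) le_rfl
  have e3 : PowerSeries.coeff n Fy = bellY n y := coeff_F y (n + 1) n (Nat.le_succ n)
  rw [e1, e2, e3] at hcoeff
  simpa using hcoeff.symm
end

section
/- Let n ≥ 0 be an integer, N ∈ ℂ with Re N > n + 1, s > 0, α ∈ ℝ, σ = s·e^{iα}, and z ∈ ℂ∖{0} with |α + arg z| < π. Then F^{(2)}(z; N, σ, N − n, σe^{−πi}) = (−1)^n · e^{πiN} · ∫_0^{∞} u^{N−n−1}·(1+u)^{−(2N−n−1)} · F^{(1)}((1+u)·z; 2N − n − 1, σ) du, where the powers of u and 1+u are real powers on (0, ∞). -/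
open MeasureTheory Filter Set Topology

/-- Iterated "hyperterminant-type" ray integral. Each list entry `(N, β)` contributes an
integration along the ray `arg t = π - α - β`, with exponential factor `e^{σ e^{iβ} t}`
(where `σ = s e^{iα}`) and power `t^{N-1}` taken with `arg t = π - α - β`. The denominator
is `p - t` where `p` is the previous integration variable (or `z` at the outermost level). -/
noncomputable def iterInt : List (ℂ × ℝ) → ℝ → ℝ → ℂ → ℂ
  | [], _, _, _ => 1
  | (N, β) :: rest, s, α, p =>
      ∫ r in Set.Ioi (0 : ℝ),
        (Complex.exp (((s : ℂ) * Complex.exp (Complex.I * ((α + β : ℝ) : ℂ))) *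
              ((r : ℂ) * Complex.exp (Complex.I * ((Real.pi - α - β : ℝ) : ℂ)))) *
            Complex.exp ((N - 1) * ((Real.log r : ℂ) + Complex.I * ((Real.pi - α - β : ℝ) : ℂ))) /
            (p - (r : ℂ) * Complex.exp (Complex.I * ((Real.pi - α - β : ℝ) : ℂ)))) *
          Complex.exp (Complex.I * ((Real.pi - α - β : ℝ) : ℂ)) *
          iterInt rest s α ((r : ℂ) * Complex.exp (Complex.I * ((Real.pi - α - β : ℝ) : ℂ)))

/-- The first-level hyperterminant `F^{(1)}(z; N, σ)` with `σ = s e^{iα}`. -/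
noncomputable def F1 (z N : ℂ) (s α : ℝ) : ℂ := iterInt [(N, 0)] s α z

/-- Attach to the parameters `N₁, …, N_m` the contour rotations `(m-k)ε`, `k = 1, …, m`. -/
noncomputable def withAngles (Ns : List ℂ) (ε : ℝ) : List (ℂ × ℝ) :=
  List.zipWith (fun i N => (N, ((Ns.length - 1 - i : ℕ) : ℝ) * ε)) (List.range Ns.length) Ns

/-- The `ε`-regularized `m`-th level hyperterminant with equal singulants `σ = s e^{iα}`:
its limit as `ε → 0⁺` is `F^{(m)}(z; N₁, …, N_m; σ)`. -/
noncomputable def FmEps (Ns : List ℂ) (s α ε : ℝ) (z : ℂ) : ℂ := iterInt (withAngles Ns ε) s α z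

noncomputable def ee (φ : ℝ) : ℂ := Complex.exp (Complex.I * (φ : ℂ))

lemma ee_ne (φ : ℝ) : ee φ ≠ 0 := Complex.exp_ne_zero _

lemma abs_ee (φ : ℝ) : ‖ee φ‖ = 1 := by
  simp [ee, Complex.norm_exp]

lemma iterInt_cons (Np : ℂ) (β : ℝ) (rest : List (ℂ × ℝ)) (s α : ℝ) (p : ℂ) :
    iterInt ((Np, β) :: rest) s α p =
      ∫ r in Set.Ioi (0 : ℝ),
        ((Real.exp (-(s * r)) : ℂ) *
            Complex.exp ((Np - 1) * ((Real.log r : ℂ) + Complex.I * ((Real.pi - α - β : ℝ) : ℂ))) /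
            (p - (r : ℂ) * ee (Real.pi - α - β))) * ee (Real.pi - α - β) *
          iterInt rest s α ((r : ℂ) * ee (Real.pi - α - β)) := by
  rw [iterInt]
  refine setIntegral_congr_fun measurableSet_Ioi (fun r hr => ?_)
  have h1 : ((s : ℂ) * Complex.exp (Complex.I * ((α + β : ℝ) : ℂ))) *
      ((r : ℂ) * Complex.exp (Complex.I * ((Real.pi - α - β : ℝ) : ℂ))) = ((-(s*r) : ℝ) : ℂ) := by
    rw [mul_mul_mul_comm, ← Complex.exp_add]
    have h2 : Complex.I * ((α + β : ℝ) : ℂ) + Complex.I * ((Real.pi - α - β : ℝ) : ℂ)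
        = (Real.pi : ℂ) * Complex.I := by push_cast; ring
    rw [h2, Complex.exp_pi_mul_I]
    push_cast; ring
  rw [h1, ee, Complex.ofReal_exp]

lemma ray_ne {α : ℝ} {z : ℂ} (hz : z ≠ 0) (harg : |α + Complex.arg z| < Real.pi) :
    ∀ r : ℝ, 0 ≤ r → z ≠ (r : ℂ) * ee (Real.pi - α) := by
  intro r hr h
  rcases eq_or_lt_of_le hr with h0 | hrpos
  · apply hz; rw [h, ← h0]; simp
  · have habs : ‖z‖ = r := by
      rw [h, norm_mul, abs_ee, mul_one, Complex.norm_real, Real.norm_eq_abs, abs_of_pos hrpos]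
    have hexp : Complex.exp ((Complex.arg z : ℂ) * Complex.I)
        = Complex.exp (Complex.I * ((Real.pi - α : ℝ) : ℂ)) := by
      have h2 := Complex.norm_mul_exp_arg_mul_I z
      rw [habs] at h2
      have hr0 : (r : ℂ) ≠ 0 := by exact_mod_cast hrpos.ne'
      have h3 := h2.trans h
      exact (mul_left_cancel₀ hr0 h3).trans (by rw [ee])
    rw [Complex.exp_eq_exp_iff_exists_int] at hexp
    obtain ⟨k, hk⟩ := hexp
    have him := congrArg Complex.im hk
    simp [Complex.add_im, Complex.mul_im] at him
    -- him should say z.arg = (π - α) + k * 2π  (possibly in some arranged form)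
    have hsum : α + Complex.arg z = (2 * (k : ℝ) + 1) * Real.pi := by nlinarith [him]
    rw [hsum] at harg
    have hk1 : (1 : ℝ) ≤ |2 * (k : ℝ) + 1| := by
      have : (1 : ℤ) ≤ |2 * k + 1| := Int.one_le_abs (by omega)
      calc (1:ℝ) ≤ ((|2 * k + 1| : ℤ) : ℝ) := by exact_mod_cast this
      _ = |2 * (k:ℝ) + 1| := by push_cast; simp
    rw [abs_mul, abs_of_pos Real.pi_pos] at harg
    nlinarith [Real.pi_pos]

lemma denom_bound {α : ℝ} {z : ℂ} (hz : z ≠ 0) (harg : |α + Complex.arg z| < Real.pi) :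
    ∃ d : ℝ, 0 < d ∧ ∀ r : ℝ, 0 ≤ r → d ≤ ‖z - (r : ℂ) * ee (Real.pi - α)‖ := by
  set w : ℂ := z * (ee (Real.pi - α))⁻¹ with hw
  have hwE : w * ee (Real.pi - α) = z := by
    rw [hw, mul_assoc, inv_mul_cancel₀ (ee_ne _), mul_one]
  have hEw : ∀ r : ℝ, ‖z - (r : ℂ) * ee (Real.pi - α)‖ = ‖w - r‖ := by
    intro r
    have : z - (r : ℂ) * ee (Real.pi - α) = (w - r) * ee (Real.pi - α) := by
      rw [sub_mul, hwE]
    rw [this, norm_mul, abs_ee, mul_one]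
  have hwr : ∀ r : ℝ, 0 ≤ r → w ≠ (r : ℂ) := by
    intro r hr h
    refine ray_ne hz harg r hr ?_
    rw [← h]; exact hwE.symm
  by_cases him : w.im = 0
  · have hre : w.re < 0 := by
      by_contra hle
      push_neg at hle
      exact hwr w.re hle (Complex.ext rfl him)
    refine ⟨-w.re, by linarith, fun r hr => ?_⟩
    rw [hEw]
    calc -w.re ≤ r - w.re := by linarith
    _ = |(w - r).re| := by
        rw [Complex.sub_re, Complex.ofReal_re, abs_of_nonpos (by linarith)]; ring
    _ ≤ ‖w - r‖ := Complex.abs_re_le_norm _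
  · refine ⟨|w.im|, abs_pos.2 him, fun r hr => ?_⟩
    rw [hEw]
    calc |w.im| = |(w - r).im| := by rw [Complex.sub_im, Complex.ofReal_im, sub_zero]
    _ ≤ ‖w - r‖ := Complex.abs_im_le_norm _

noncomputable def Gz (s : ℝ) (M ν : ℂ) (z E : ℂ) (r u : ℝ) : ℂ :=
  (Real.exp (-(s * (r * (1 + u)))) : ℂ) * Complex.exp ((M - 1) * (Real.log r : ℂ)) *
    Complex.exp (ν * (Real.log u : ℂ)) / (((1 + u : ℝ) : ℂ) * (z - (r : ℂ) * E))

noncomputable def Hz (s : ℝ) (M : ℂ) (z E : ℂ) (u x : ℝ) : ℂ :=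
  (Real.exp (-(s * x)) : ℂ) * Complex.exp ((M - 1) * (Real.log x : ℂ)) /
    (((1 + u : ℝ) : ℂ) * z - (x : ℂ) * E)

lemma norm_Gz (s : ℝ) (M ν : ℂ) (z E : ℂ) (r u : ℝ) (hu : 0 < u) :
    ‖Gz s M ν z E r u‖ =
      Real.exp (-(s * (r * (1 + u)))) * Real.exp ((M.re - 1) * Real.log r) *
        Real.exp (ν.re * Real.log u) / ((1 + u) * ‖z - (r : ℂ) * E‖) := by
  have h1 : (0:ℝ) < 1 + u := by linarith
  simp [Gz, map_div₀, map_mul, Complex.norm_exp, Complex.norm_real,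
    Complex.mul_re, Complex.sub_re, Complex.one_re, Complex.ofReal_re, Complex.ofReal_im,
    Complex.sub_im, Complex.one_im, abs_of_pos, Real.exp_pos, abs_of_pos h1]
  rw [show ((1:ℂ) + (u:ℂ)) = ((1+u:ℝ):ℂ) by push_cast; ring, Complex.norm_real, Real.norm_eq_abs, abs_of_pos h1]

lemma Gz_contOn (s : ℝ) (M ν : ℂ) (z E : ℂ) {d : ℝ} (hd0 : 0 < d)
    (hd : ∀ r : ℝ, 0 ≤ r → d ≤ ‖z - (r : ℂ) * E‖) :
    ContinuousOn (Function.uncurry (Gz s M ν z E)) (Ioi (0:ℝ) ×ˢ Ioi (0:ℝ)) := by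
  have hne : ∀ q : ℝ × ℝ, q ∈ Ioi (0:ℝ) ×ˢ Ioi (0:ℝ) →
      (((1 + q.2 : ℝ) : ℂ) * (z - (q.1 : ℂ) * E)) ≠ 0 := by
    intro q hq
    have h2 : (0:ℝ) < q.2 := hq.2
    have h1 : (0:ℝ) < 1 + q.2 := by linarith
    refine mul_ne_zero (by exact_mod_cast h1.ne') ?_
    intro h0
    have := hd q.1 (le_of_lt hq.1)
    rw [h0] at this; simp at this; linarith
  apply ContinuousOn.div _ _ hne
  · apply ContinuousOn.mul
    · apply ContinuousOn.mul
      · apply Continuous.continuousOn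
        exact Complex.continuous_ofReal.comp (by continuity)
      · apply Complex.continuous_exp.comp_continuousOn
        apply ContinuousOn.mul continuousOn_const
        apply Complex.continuous_ofReal.comp_continuousOn
        apply Real.continuousOn_log.comp continuous_fst.continuousOn
        intro q hq
        exact ne_of_gt hq.1
    · apply Complex.continuous_exp.comp_continuousOn
      apply ContinuousOn.mul continuousOn_const
      apply Complex.continuous_ofReal.comp_continuousOn
      apply Real.continuousOn_log.comp continuous_snd.continuousOn
      intro q hq
      exact ne_of_gt hq.2
  · apply Continuous.continuousOn
    continuity

lemma Gz_section_int {s : ℝ} (hs : 0 < s) (M ν : ℂ) {z E : ℂ} {d : ℝ} (hd0 : 0 < d)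
    (hd : ∀ r : ℝ, 0 ≤ r → d ≤ ‖z - (r : ℂ) * E‖) (hb : 0 < ν.re)
    {r : ℝ} (hr : 0 < r) :
    Integrable (fun u => Gz s M ν z E r u) (volume.restrict (Ioi (0:ℝ))) := by
  apply Integrable.mono'
    ((integrableOn_rpow_mul_exp_neg_mul_rpow (p := 1) (s := ν.re) (b := s*r)
      (by linarith) zero_lt_one (by positivity)).const_mul
      (Real.exp (-(s*r)) * Real.exp ((M.re - 1) * Real.log r) / d))
  · refine ((Gz_contOn s M ν z E hd0 hd).comp
      (Continuous.continuousOn (continuous_const.prodMk continuous_id)) (fun u hu => ?_)).aestronglyMeasurable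
      measurableSet_Ioi
    exact Set.mk_mem_prod hr hu
  · filter_upwards [ae_restrict_mem measurableSet_Ioi] with u hu
    rw [norm_Gz s M ν z E r u hu]
    have h1u : (0:ℝ) < 1 + u := by have : (0:ℝ) < u := hu; linarith
    have hA : d ≤ (1 + u) * ‖z - (r : ℂ) * E‖ := by
      calc d ≤ ‖z - (r : ℂ) * E‖ := hd r hr.le
      _ ≤ (1 + u) * ‖z - (r : ℂ) * E‖ :=
          le_mul_of_one_le_left (norm_nonneg _) (by linarith [show (0:ℝ) < u from hu])
    refine le_trans (div_le_div_of_nonneg_left (by positivity) hd0 hA) (le_of_eq ?_)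
    rw [Real.rpow_one, Real.rpow_def_of_pos (show (0:ℝ) < u from hu),
      show -(s*(r*(1+u))) = -(s*r) + -(s*r)*u by ring, Real.exp_add]
    ring

lemma Gz_prod_int {s : ℝ} (hs : 0 < s) (M ν : ℂ) {z E : ℂ} {d : ℝ} (hd0 : 0 < d)
    (hd : ∀ r : ℝ, 0 ≤ r → d ≤ ‖z - (r : ℂ) * E‖) (hb : 0 < ν.re)
    (hab : ν.re + 1 < M.re) :
    Integrable (Function.uncurry (Gz s M ν z E))
      ((volume.restrict (Ioi (0:ℝ))).prod (volume.restrict (Ioi (0:ℝ)))) := by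
  have hmes : AEStronglyMeasurable (Function.uncurry (Gz s M ν z E))
      ((volume.restrict (Ioi (0:ℝ))).prod (volume.restrict (Ioi (0:ℝ)))) := by
    rw [Measure.prod_restrict]
    exact (Gz_contOn s M ν z E hd0 hd).aestronglyMeasurable
      (measurableSet_Ioi.prod measurableSet_Ioi)
  rw [MeasureTheory.integrable_prod_iff hmes]
  refine ⟨?_, ?_⟩
  · filter_upwards [ae_restrict_mem measurableSet_Ioi] with r hr
    exact Gz_section_int hs M ν hd0 hd hb hr
  · apply Integrable.mono'
      ((integrableOn_rpow_mul_exp_neg_mul_rpow (p := 1) (s := M.re - 1 - (ν.re+1)) (b := s)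
        (by linarith) zero_lt_one hs).const_mul
        (Real.Gamma (ν.re + 1) * (1/s) ^ (ν.re+1) / d))
    · exact hmes.norm.integral_prod_right'
    · filter_upwards [ae_restrict_mem measurableSet_Ioi] with r hr
      have hr' : (0:ℝ) < r := hr
      rw [Real.norm_of_nonneg (integral_nonneg (fun u => norm_nonneg _))]
      have key : (∫ u in Ioi (0:ℝ), ‖Gz s M ν z E r u‖) ≤
          (Real.exp (-(s*r)) * Real.exp ((M.re - 1) * Real.log r) / d) *
            ((1/(s*r)) ^ (ν.re+1) * Real.Gamma (ν.re+1)) := by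
        have hint2 : IntegrableOn (fun u : ℝ =>
            (Real.exp (-(s*r)) * Real.exp ((M.re - 1) * Real.log r) / d) *
              (u ^ ν.re * Real.exp (-(s*r) * u ^ (1:ℝ)))) (Ioi 0) volume :=
          (integrableOn_rpow_mul_exp_neg_mul_rpow (p := 1) (s := ν.re) (b := s*r)
            (by linarith) zero_lt_one (mul_pos hs hr')).const_mul _
        have hmono := setIntegral_mono_on
          ((Gz_section_int hs M ν hd0 hd hb hr').norm) hint2 measurableSet_Ioi ?_
        · refine le_trans hmono (le_of_eq ?_)
          rw [MeasureTheory.integral_const_mul]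
          congr 1
          have : ∀ u ∈ Ioi (0:ℝ), u ^ ν.re * Real.exp (-(s*r) * u ^ (1:ℝ))
              = u ^ (ν.re + 1 - 1) * Real.exp (-(s*r*u)) := by
            intro u hu
            rw [Real.rpow_one, add_sub_cancel_right, show -(s*r)*u = -(s*r*u) by ring]
          rw [setIntegral_congr_fun measurableSet_Ioi this,
            Real.integral_rpow_mul_exp_neg_mul_Ioi (by linarith) (mul_pos hs hr')]
        · intro u hu
          rw [norm_Gz s M ν z E r u hu]
          have h1u : (0:ℝ) < 1 + u := by have : (0:ℝ) < u := hu; linarith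
          have hA : d ≤ (1 + u) * ‖z - (r : ℂ) * E‖ := by
            calc d ≤ ‖z - (r : ℂ) * E‖ := hd r hr'.le
            _ ≤ (1 + u) * ‖z - (r : ℂ) * E‖ :=
                le_mul_of_one_le_left (norm_nonneg _)
                  (by linarith [show (0:ℝ) < u from hu])
          refine le_trans (div_le_div_of_nonneg_left (by positivity) hd0 hA) (le_of_eq ?_)
          rw [Real.rpow_one, Real.rpow_def_of_pos (show (0:ℝ) < u from hu),
            show -(s*(r*(1+u))) = -(s*r) + -(s*r)*u by ring, Real.exp_add]
          ring
      refine le_trans key (le_of_eq ?_)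
      have e1 : Real.exp ((M.re - 1) * Real.log r) = r ^ (M.re - 1) := by
        rw [Real.rpow_def_of_pos hr', mul_comm]
      have e2 : (1/(s*r)) ^ (ν.re+1) = (1/s) ^ (ν.re+1) * r ^ (-(ν.re+1)) := by
        rw [show (1/(s*r)) = (1/s) * (1/r) by field_simp,
          Real.mul_rpow (by positivity) (by positivity), one_div r,
          Real.inv_rpow hr'.le, ← Real.rpow_neg hr'.le]
      have e3 : r ^ (M.re - 1) * r ^ (-(ν.re+1)) = r ^ (M.re - 1 - (ν.re+1)) := by
        rw [← Real.rpow_add hr']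
        ring_nf
      rw [Real.rpow_one, e1, e2, show -s*r = -(s*r) by ring, ← e3]
      ring

lemma iterInt_nil (s α : ℝ) (p : ℂ) : iterInt [] s α p = 1 := rfl

lemma inner_eval (Nn : ℂ) (s : ℝ) (α : ℝ) {r : ℝ} (hr : 0 < r) :
    iterInt [(Nn, -Real.pi)] s α ((r : ℂ) * ee (Real.pi - α)) =
      -(Complex.exp ((Nn - 1) * (Complex.I * ((Real.pi - α - -Real.pi : ℝ) : ℂ))) *
          Complex.exp ((Nn - 1) * (Real.log r : ℂ))) *
        ∫ u in Set.Ioi (0:ℝ),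
          (Real.exp (-(s * (r * u))) : ℂ) * Complex.exp ((Nn - 1) * (Real.log u : ℂ)) /
            ((1 + u : ℝ) : ℂ) := by
  have hE2 : ee (Real.pi - α - -Real.pi) = -ee (Real.pi - α) := by
    have harg : Complex.I * ((Real.pi - α - -Real.pi : ℝ) : ℂ)
        = Complex.I * ((Real.pi - α : ℝ) : ℂ) + (Real.pi : ℂ) * Complex.I := by
      push_cast; ring
    rw [ee, ee, harg, Complex.exp_add, Complex.exp_pi_mul_I, mul_neg_one]
  set g : ℝ → ℂ := fun t => (Real.exp (-(s*t)) : ℂ) *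
    Complex.exp ((Nn-1) * (Real.log t : ℂ)) * (((r + t : ℝ) : ℂ))⁻¹ with hg
  rw [iterInt_cons]
  have step1 : (∫ t in Set.Ioi (0:ℝ),
      ((Real.exp (-(s * t)) : ℂ) *
          Complex.exp ((Nn - 1) * ((Real.log t : ℂ) + Complex.I * ((Real.pi - α - -Real.pi : ℝ) : ℂ))) /
          ((r : ℂ) * ee (Real.pi - α) - (t : ℂ) * ee (Real.pi - α - -Real.pi))) *
        ee (Real.pi - α - -Real.pi) *
        iterInt [] s α ((t : ℂ) * ee (Real.pi - α - -Real.pi)))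
      = ∫ t in Set.Ioi (0:ℝ),
        (-(Complex.exp ((Nn - 1) * (Complex.I * ((Real.pi - α - -Real.pi : ℝ) : ℂ))))) * g t := by
    refine setIntegral_congr_fun measurableSet_Ioi (fun t ht => ?_)
    have ht' : (0:ℝ) < t := ht
    rw [iterInt_nil, mul_one, hE2]
    have hden : (r : ℂ) * ee (Real.pi - α) - (t : ℂ) * (-ee (Real.pi - α))
        = ((r + t : ℝ) : ℂ) * ee (Real.pi - α) := by push_cast; ring
    rw [hden]
    have hrt : ((r + t : ℝ) : ℂ) ≠ 0 := by
      have : (0:ℝ) < r + t := by linarith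
      exact_mod_cast this.ne'
    rw [mul_add, Complex.exp_add]
    have key : ∀ X : ℂ, X / (((r + t : ℝ) : ℂ) * ee (Real.pi - α)) * -ee (Real.pi - α)
        = -(X * (((r + t : ℝ) : ℂ))⁻¹) := by
      intro X
      rw [div_mul_eq_mul_div, mul_neg, neg_div, neg_eq_iff_eq_neg, neg_neg,
        mul_div_assoc, mul_comm (((r + t : ℝ) : ℂ)) (ee (Real.pi - α)),
        div_eq_mul_inv, mul_inv, ← mul_assoc (ee (Real.pi - α)),
        mul_inv_cancel₀ (ee_ne _), one_mul]
    rw [key]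
    simp only [hg]
    ring
  rw [step1, MeasureTheory.integral_const_mul]
  have hs1 := MeasureTheory.integral_comp_mul_left_Ioi g 0 hr
  rw [mul_zero] at hs1
  have h2 : (∫ t in Set.Ioi (0:ℝ), g t) = r • ∫ u in Set.Ioi (0:ℝ), g (r*u) := by
    rw [hs1, smul_smul, mul_inv_cancel₀ hr.ne', one_smul]
  have step3 : (∫ u in Set.Ioi (0:ℝ), g (r*u))
      = ((r:ℂ)⁻¹ * Complex.exp ((Nn-1) * (Real.log r : ℂ))) *
        ∫ u in Set.Ioi (0:ℝ),
          (Real.exp (-(s * (r * u))) : ℂ) * Complex.exp ((Nn - 1) * (Real.log u : ℂ)) /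
            ((1 + u : ℝ) : ℂ) := by
    rw [← MeasureTheory.integral_const_mul]
    refine setIntegral_congr_fun measurableSet_Ioi (fun u hu => ?_)
    have hu' : (0:ℝ) < u := hu
    have h1u : ((1 + u : ℝ) : ℂ) ≠ 0 := by
      have : (0:ℝ) < 1 + u := by linarith
      exact_mod_cast this.ne'
    have hrc : (r : ℂ) ≠ 0 := by exact_mod_cast hr.ne'
    rw [hg]
    simp only
    rw [Real.log_mul hr.ne' hu'.ne', Complex.ofReal_add, mul_add, Complex.exp_add,
      show ((r + r*u : ℝ) : ℂ) = (r:ℂ) * ((1 + u : ℝ) : ℂ) by push_cast; ring, mul_inv]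
    field_simp
  rw [h2, step3, Complex.real_smul]
  have hrc : (r : ℂ) ≠ 0 := by exact_mod_cast hr.ne'
  field_simp

lemma LHS_eq (N Nn : ℂ) (s α : ℝ) (z : ℂ) :
    iterInt [(N, 0), (Nn, -Real.pi)] s α z =
      -(ee (Real.pi - α) * Complex.exp ((N - 1) * (Complex.I * ((Real.pi - α : ℝ) : ℂ))) *
          Complex.exp ((Nn - 1) * (Complex.I * ((Real.pi - α - -Real.pi : ℝ) : ℂ)))) *
        ∫ r in Set.Ioi (0:ℝ), ∫ u in Set.Ioi (0:ℝ),
          Gz s (N + Nn - 1) (Nn - 1) z (ee (Real.pi - α)) r u := by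
  rw [iterInt_cons]
  simp only [sub_zero]
  rw [← MeasureTheory.integral_const_mul]
  refine setIntegral_congr_fun measurableSet_Ioi (fun r hr => ?_)
  have hr' : (0:ℝ) < r := hr
  rw [inner_eval Nn s α hr']
  have hinner : (∫ u in Set.Ioi (0:ℝ), Gz s (N + Nn - 1) (Nn - 1) z (ee (Real.pi - α)) r u)
      = ((Real.exp (-(s*r)) : ℂ) * Complex.exp ((N-1) * (Real.log r : ℂ)) *
          Complex.exp ((Nn-1) * (Real.log r : ℂ)) / (z - (r:ℂ) * ee (Real.pi - α))) *
        ∫ u in Set.Ioi (0:ℝ), (Real.exp (-(s*(r*u))) : ℂ) *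
          Complex.exp ((Nn - 1) * (Real.log u : ℂ)) / ((1 + u : ℝ) : ℂ) := by
    rw [← MeasureTheory.integral_const_mul]
    refine setIntegral_congr_fun measurableSet_Ioi (fun u hu => ?_)
    rw [Gz, show -(s*(r*(1+u))) = -(s*r) + -(s*(r*u)) by ring, Real.exp_add,
      Complex.ofReal_mul,
      show Complex.exp ((N + Nn - 1 - 1) * (Real.log r : ℂ))
          = Complex.exp ((N-1) * (Real.log r : ℂ)) * Complex.exp ((Nn-1) * (Real.log r : ℂ)) by
        rw [← Complex.exp_add]; congr 1; ring]
    simp only [div_eq_mul_inv, mul_inv]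
    ring
  rw [hinner, mul_add, Complex.exp_add]
  ring


lemma swap_inner (s : ℝ) (M ν : ℂ) (z E : ℂ) {u : ℝ} (hu : 0 < u) :
    (∫ r in Set.Ioi (0:ℝ), Gz s M ν z E r u)
      = (1+u)⁻¹ • ((Complex.exp (-((M-1) * (Real.log (1+u) : ℂ))) *
          Complex.exp (ν * (Real.log u : ℂ))) *
          ∫ x in Set.Ioi (0:ℝ), Hz s M z E u x) := by
  have h1u : (0:ℝ) < 1 + u := by linarith
  have hcpos : (0:ℝ) < (1+u)⁻¹ := inv_pos.2 h1u
  have hs1 := MeasureTheory.integral_comp_mul_left_Ioi (fun r => Gz s M ν z E r u) 0 hcpos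
  rw [mul_zero] at hs1
  have h2 : (∫ r in Set.Ioi (0:ℝ), Gz s M ν z E r u)
      = (1+u)⁻¹ • ∫ x in Set.Ioi (0:ℝ), Gz s M ν z E ((1+u)⁻¹ * x) u := by
    rw [hs1, smul_smul, inv_inv, inv_mul_cancel₀ h1u.ne', one_smul]
  rw [h2]
  congr 1
  rw [← MeasureTheory.integral_const_mul]
  refine setIntegral_congr_fun measurableSet_Ioi (fun x hx => ?_)
  have hx' : (0:ℝ) < x := hx
  rw [Gz, Hz]
  have m1 : -(s * ((1+u)⁻¹ * x * (1 + u))) = -(s*x) := by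
    field_simp
  have m2 : Real.log ((1+u)⁻¹ * x) = Real.log x - Real.log (1+u) := by
    rw [Real.log_mul (by positivity) hx'.ne', Real.log_inv]; ring
  have m3 : Complex.exp ((M-1) * ((Real.log ((1+u)⁻¹ * x) : ℝ) : ℂ))
      = Complex.exp ((M-1) * (Real.log x : ℂ)) * Complex.exp (-((M-1) * (Real.log (1+u) : ℂ))) := by
    rw [m2, ← Complex.exp_add]
    congr 1
    push_cast
    ring
  have m4 : (((1 + u : ℝ) : ℂ)) * (z - (((1+u)⁻¹ * x : ℝ) : ℂ) * E)
      = ((1 + u : ℝ) : ℂ) * z - (x:ℂ) * E := by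
    have h1c : (1 + (u : ℂ)) ≠ 0 := by
      rw [show (1 + (u:ℂ)) = ((1 + u : ℝ) : ℂ) by push_cast; ring]
      exact_mod_cast h1u.ne'
    push_cast
    field_simp
  rw [m1, m3, m4]
  simp only [div_eq_mul_inv, mul_inv]
  ring

lemma RHS_integrand (N Nn : ℂ) (s α : ℝ) (z : ℂ) {u : ℝ} (hu : 0 < u) :
    (u : ℂ) ^ (Nn - 1) * ((1 : ℂ) + (u : ℂ)) ^ (-(N + Nn - 1)) *
        F1 (((1 : ℂ) + (u : ℂ)) * z) (N + Nn - 1) s α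
      = (ee (Real.pi - α) *
          Complex.exp ((N + Nn - 1 - 1) * (Complex.I * ((Real.pi - α : ℝ) : ℂ)))) *
        ((Complex.exp (-((N + Nn - 1 - 1) * (Real.log (1+u) : ℂ))) *
          Complex.exp ((Nn - 1) * (Real.log u : ℂ))) *
          ((((1 + u : ℝ) : ℂ))⁻¹ *
          ∫ x in Set.Ioi (0:ℝ), Hz s (N + Nn - 1) z (ee (Real.pi - α)) u x)) := by
  have h1u : (0:ℝ) < 1 + u := by linarith
  have h1c : ((1 + u : ℝ) : ℂ) ≠ 0 := by exact_mod_cast h1u.ne'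
  have hcast : ((1 : ℂ) + (u : ℂ)) = ((1 + u : ℝ) : ℂ) := by push_cast; ring
  have hF : F1 (((1 : ℂ) + (u : ℂ)) * z) (N + Nn - 1) s α
      = (ee (Real.pi - α) *
          Complex.exp ((N + Nn - 1 - 1) * (Complex.I * ((Real.pi - α : ℝ) : ℂ)))) *
        ∫ x in Set.Ioi (0:ℝ), Hz s (N + Nn - 1) z (ee (Real.pi - α)) u x := by
    rw [F1, iterInt_cons]
    simp only [sub_zero]
    rw [← MeasureTheory.integral_const_mul]
    refine setIntegral_congr_fun measurableSet_Ioi (fun x hx => ?_)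
    rw [iterInt_nil, mul_one, Hz, mul_add, Complex.exp_add, hcast]
    simp only [div_eq_mul_inv, mul_inv]
    ring
  have hcu : (u : ℂ) ^ (Nn - 1) = Complex.exp ((Nn - 1) * (Real.log u : ℂ)) := by
    rw [Complex.cpow_def_of_ne_zero (by exact_mod_cast hu.ne'),
      ← Complex.ofReal_log hu.le, mul_comm]
  have hc1u : ((1 : ℂ) + (u : ℂ)) ^ (-(N + Nn - 1))
      = ((((1 + u : ℝ) : ℂ))⁻¹ * Complex.exp (-((N + Nn - 1 - 1) * (Real.log (1+u) : ℂ)))) := by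
    rw [hcast, Complex.cpow_def_of_ne_zero h1c, ← Complex.ofReal_log h1u.le]
    have hexp1u : ((1 + u : ℝ) : ℂ) = Complex.exp ((Real.log (1+u) : ℝ) : ℂ) := by
      rw [← Complex.ofReal_exp, Real.exp_log h1u]
    rw [hexp1u]
    rw [← Complex.exp_neg, ← Complex.exp_add, Complex.exp_eq_exp_iff_exists_int]
    exact ⟨0, by push_cast; ring⟩
  rw [hF, hcu, hc1u]
  ring

lemma neg_exp_eq (A B : ℂ) (h : ∃ k : ℤ, A + Real.pi * Complex.I = B + k * (2*Real.pi*Complex.I)) :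
    -Complex.exp A = Complex.exp B := by
  obtain ⟨k, hk⟩ := h
  have h2 : Complex.exp (A + Real.pi * Complex.I) = Complex.exp B := by
    rw [Complex.exp_eq_exp_iff_exists_int]; exact ⟨k, hk⟩
  rw [Complex.exp_add, Complex.exp_pi_mul_I] at h2
  linear_combination h2


/-- **Beta-type representation of the mixed second-level hyperterminant:**
`F^{(2)}(z; N, σ, N-n, σe^{-πi}) = (-1)^n e^{πiN} ∫_0^∞ u^{N-n-1}(1+u)^{-(2N-n-1)}
F^{(1)}((1+u)z; 2N-n-1, σ) du`, the powers of `u` and `1+u` being real powers on `(0, ∞)`. -/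
theorem mixed_hyperterminant_rep (n : ℕ) (N : ℂ) (hN : (n : ℝ) + 1 < N.re)
    (s : ℝ) (hs : 0 < s) (α : ℝ) (z : ℂ) (hz : z ≠ 0)
    (harg : |α + Complex.arg z| < Real.pi) :
    iterInt [(N, 0), (N - (n : ℂ), -Real.pi)] s α z =
      (-1 : ℂ) ^ n * Complex.exp ((Real.pi : ℂ) * Complex.I * N) *
        ∫ u in Set.Ioi (0 : ℝ),
          (u : ℂ) ^ (N - (n : ℂ) - 1) * ((1 : ℂ) + (u : ℂ)) ^ (-(2 * N - (n : ℂ) - 1)) *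
            F1 (((1 : ℂ) + (u : ℂ)) * z) (2 * N - (n : ℂ) - 1) s α := by
  obtain ⟨d, hd0, hd⟩ := denom_bound hz harg
  set Nn : ℂ := N - (n : ℂ) with hNn
  have hb : 0 < (Nn - 1).re := by
    rw [hNn]
    simp only [Complex.sub_re, Complex.one_re, Complex.natCast_re]
    linarith
  have hab : (Nn - 1).re + 1 < (N + Nn - 1).re := by
    rw [hNn]
    simp only [Complex.sub_re, Complex.add_re, Complex.one_re, Complex.natCast_re]
    linarith
  have hswap := MeasureTheory.integral_integral_swap
    (f := fun r u => Gz s (N + Nn - 1) (Nn - 1) z (ee (Real.pi - α)) r u)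
    (Gz_prod_int hs (N + Nn - 1) (Nn - 1) hd0 hd hb hab)
  rw [LHS_eq N Nn s α z, hswap,
    show (2 * N - (n:ℂ) - 1) = N + Nn - 1 by rw [hNn]; ring,
    setIntegral_congr_fun measurableSet_Ioi
      (fun u (hu : u ∈ Set.Ioi (0:ℝ)) =>
        RHS_integrand N Nn s α z (show (0:ℝ) < u from hu)),
    MeasureTheory.integral_const_mul,
    setIntegral_congr_fun measurableSet_Ioi
      (fun u (hu : u ∈ Set.Ioi (0:ℝ)) =>
        swap_inner s (N + Nn - 1) (Nn - 1) z (ee (Real.pi - α)) (show (0:ℝ) < u from hu))]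
  have hWeq : (∫ u in Set.Ioi (0:ℝ), (1+u)⁻¹ •
        ((Complex.exp (-((N + Nn - 1 - 1) * (Real.log (1+u) : ℂ))) *
          Complex.exp ((Nn - 1) * (Real.log u : ℂ))) *
          ∫ x in Set.Ioi (0:ℝ), Hz s (N + Nn - 1) z (ee (Real.pi - α)) u x))
      = ∫ u in Set.Ioi (0:ℝ),
        (Complex.exp (-((N + Nn - 1 - 1) * (Real.log (1+u) : ℂ))) *
          Complex.exp ((Nn - 1) * (Real.log u : ℂ))) *
          ((((1 + u : ℝ) : ℂ))⁻¹ *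
            ∫ x in Set.Ioi (0:ℝ), Hz s (N + Nn - 1) z (ee (Real.pi - α)) u x) := by
    refine setIntegral_congr_fun measurableSet_Ioi (fun u hu => ?_)
    rw [Complex.real_smul, Complex.ofReal_inv]
    ring
  rw [hWeq]
  have hK : -(ee (Real.pi - α) *
        Complex.exp ((N - 1) * (Complex.I * ((Real.pi - α : ℝ) : ℂ))) *
        Complex.exp ((Nn - 1) * (Complex.I * ((Real.pi - α - -Real.pi : ℝ) : ℂ))))
      = (-1:ℂ)^n * Complex.exp ((Real.pi:ℂ) * Complex.I * N) *
        (ee (Real.pi - α) *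
          Complex.exp ((N + Nn - 1 - 1) * (Complex.I * ((Real.pi - α : ℝ) : ℂ)))) := by
    have hm1 : ((-1:ℂ))^n = Complex.exp ((n:ℕ) * ((Real.pi:ℂ) * Complex.I)) := by
      rw [Complex.exp_nat_mul, Complex.exp_pi_mul_I]
    rw [hm1, ee, ← Complex.exp_add, ← Complex.exp_add, ← Complex.exp_add, ← Complex.exp_add, ← Complex.exp_add]
    refine neg_exp_eq _ _ ⟨-(n:ℤ), ?_⟩
    rw [hNn]
    push_cast
    ring
  rw [hK]
  ring
end

section
/- Let n ≥ 0 be an integer, N ∈ ℂ with Re N > n + 1, s > 0, α ∈ ℝ, σ = s·e^{iα}, and z ∈ ℂ∖{0} with |α + arg z| < π. Then F^{(2)}(z; N, σ, N − n, σe^{πi}) = e^{−2πiN} · F^{(2)}(z; N, σ, N − n, σe^{−πi}). -/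
open MeasureTheory Filter Set Topology

private lemma exp_I_real_eq (x y : ℝ) (h : x = y + 2 * Real.pi) :
    Complex.exp (Complex.I * (x : ℂ)) = Complex.exp (Complex.I * (y : ℂ)) := by
  rw [h]; push_cast
  rw [mul_add, Complex.exp_add,
    show Complex.I * (2 * (Real.pi : ℂ)) = 2 * Real.pi * Complex.I by ring,
    Complex.exp_two_pi_mul_I, mul_one]

private lemma inner_eq (n : ℕ) (N : ℂ) (s α : ℝ) (p : ℂ) :
    iterInt [(N - (n : ℂ), Real.pi)] s α p =
      Complex.exp (-2 * (Real.pi : ℂ) * Complex.I * N) *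
        iterInt [(N - (n : ℂ), -Real.pi)] s α p := by
  simp only [iterInt, mul_one]
  rw [← MeasureTheory.integral_const_mul]
  congr 1
  funext r
  have hE : Complex.exp (Complex.I * ((Real.pi - α - -Real.pi : ℝ) : ℂ)) =
      Complex.exp (Complex.I * ((Real.pi - α - Real.pi : ℝ) : ℂ)) :=
    exp_I_real_eq _ _ (by ring)
  have hE2 : Complex.exp (Complex.I * ((α + Real.pi : ℝ) : ℂ)) =
      Complex.exp (Complex.I * ((α + -Real.pi : ℝ) : ℂ)) :=
    exp_I_real_eq _ _ (by ring)
  rw [hE, hE2]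
  have hP : Complex.exp ((N - (n : ℂ) - 1) *
        ((Real.log r : ℂ) + Complex.I * ((Real.pi - α - Real.pi : ℝ) : ℂ))) =
      Complex.exp (-2 * (Real.pi : ℂ) * Complex.I * N) *
        Complex.exp ((N - (n : ℂ) - 1) *
          ((Real.log r : ℂ) + Complex.I * ((Real.pi - α - -Real.pi : ℝ) : ℂ))) := by
    rw [← Complex.exp_add,
      show (-2 * (Real.pi : ℂ) * Complex.I * N + (N - (n : ℂ) - 1) *
          ((Real.log r : ℂ) + Complex.I * ((Real.pi - α - -Real.pi : ℝ) : ℂ)))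
        = (N - (n : ℂ) - 1) * ((Real.log r : ℂ) + Complex.I * ((Real.pi - α - Real.pi : ℝ) : ℂ))
          + (((-(n : ℤ) - 1) : ℤ) * (2 * (Real.pi : ℂ) * Complex.I)) by push_cast; ring,
      Complex.exp_add, Complex.exp_int_mul_two_pi_mul_I, mul_one]
  rw [hP]; ring

/-- **Reflection identity for the mixed second-level hyperterminants:**
`F^{(2)}(z; N, σ, N-n, σe^{πi}) = e^{-2πiN}·F^{(2)}(z; N, σ, N-n, σe^{-πi})`. -/
theorem mixed_hyperterminant_reflection (n : ℕ) (N : ℂ) (hN : (n : ℝ) + 1 < N.re)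
    (s : ℝ) (hs : 0 < s) (α : ℝ) (z : ℂ) (hz : z ≠ 0)
    (harg : |α + Complex.arg z| < Real.pi) :
    iterInt [(N, 0), (N - (n : ℂ), Real.pi)] s α z =
      Complex.exp (-2 * (Real.pi : ℂ) * Complex.I * N) *
        iterInt [(N, 0), (N - (n : ℂ), -Real.pi)] s α z := by
  conv_lhs => rw [iterInt]
  conv_rhs => rw [iterInt]
  simp only [inner_eq n N s α]
  rw [← MeasureTheory.integral_const_mul]
  congr 1
  funext r
  ring
end

section
/- For every z ∈ ℂ with Im z > 0, the scaled gamma function satisfies Γ*(z) · Γ*(−z) · (1 − e^{2πiz}) = 1. (This is the exponentiated form of the functional relation g(z) = −g(z e^{−πi}) − log(1 − e^{2πiz}) for the Stirling remainder g, obtained from the reflection formula for the gamma function.) -/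
open MeasureTheory Filter Set Topology

noncomputable def Gammastar (w : ℂ) : ℂ :=
  Complex.Gamma w * Complex.exp w * Complex.exp (-(w - 1 / 2) * Complex.log w) /
    (Real.sqrt (2 * Real.pi) : ℂ)

/-- **Exponentiated reflection formula for the scaled gamma function:** for `Im z > 0`,
`Γ*(z)·Γ*(-z)·(1 - e^{2πiz}) = 1`. -/
theorem gammastar_reflection (z : ℂ) (hz : 0 < z.im) :
    Gammastar z * Gammastar (-z) *
      (1 - Complex.exp (2 * (Real.pi : ℂ) * Complex.I * z)) = 1 := by
  have hpi := Real.pi_pos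
  have hz0 : z ≠ 0 := fun h => by simp [h] at hz
  have hnz0 : -z ≠ 0 := neg_ne_zero.mpr hz0
  set E := Complex.exp ((Real.pi : ℂ) * Complex.I * z) with hE
  have hEne : E ≠ 0 := Complex.exp_ne_zero _
  have hEinv : E * E⁻¹ = 1 := mul_inv_cancel₀ hEne
  have h2E : Complex.exp (2 * (Real.pi : ℂ) * Complex.I * z) = E * E := by
    rw [hE, ← Complex.exp_add]; ring_nf
  have hEE1 : 1 - E * E ≠ 0 := by
    intro h
    have habs : ‖E * E‖ < 1 := by
      rw [← h2E, Complex.norm_exp]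
      rw [Real.exp_lt_one_iff]
      have hre : (2 * (Real.pi : ℂ) * Complex.I * z).re = -(2 * Real.pi * z.im) := by
        simp [Complex.mul_re, Complex.mul_im]
      rw [hre]
      nlinarith
    rw [← sub_eq_zero.mp h] at habs
    simp at habs
  -- log(-z) = log z - πI
  have hlog : Complex.log (-z) = Complex.log z - Real.pi * Complex.I := by
    rw [Complex.log, Complex.log, Complex.arg_neg_eq_arg_sub_pi_of_im_pos hz, norm_neg]
    push_cast
    ring
  -- sin in terms of E
  have hS : Complex.sin ((Real.pi : ℂ) * z) * (2 * E) = (1 - E * E) * Complex.I := by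
    rw [Complex.sin,
      show -((Real.pi : ℂ) * z) * Complex.I = -((Real.pi : ℂ) * Complex.I * z) by ring,
      show ((Real.pi : ℂ) * z) * Complex.I = (Real.pi : ℂ) * Complex.I * z by ring,
      Complex.exp_neg, ← hE]
    field_simp
  have hSne : Complex.sin ((Real.pi : ℂ) * z) ≠ 0 := by
    intro h
    rw [h, zero_mul] at hS
    rcases mul_eq_zero.mp hS.symm with h1 | h1
    · exact hEE1 h1
    · exact Complex.I_ne_zero h1
  -- Gamma reflection without division
  have hG' : Complex.Gamma z * Complex.Gamma (-z) * (-z) * Complex.sin ((Real.pi : ℂ) * z)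
      = (Real.pi : ℂ) := by
    have h1 : Complex.Gamma (1 - z) = -z * Complex.Gamma (-z) := by
      have := Complex.Gamma_add_one (-z) hnz0
      rw [← this]; ring_nf
    have h2 := Complex.Gamma_mul_Gamma_one_sub z
    rw [h1] at h2
    rw [eq_div_iff hSne] at h2
    linear_combination h2
  -- exp(-(π/2) I) = -I
  have hexpI : Complex.exp (-((Real.pi : ℂ) / 2) * Complex.I) = -Complex.I := by
    rw [show -((Real.pi : ℂ) / 2) * Complex.I = ((-(Real.pi / 2) : ℝ) : ℂ) * Complex.I by
      push_cast; ring, Complex.exp_mul_I]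
    push_cast
    simp
  -- exp product
  have hexp : Complex.exp z * Complex.exp (-(z - 1 / 2) * Complex.log z) *
      (Complex.exp (-z) *
        Complex.exp (-(-z - 1 / 2) * (Complex.log z - (Real.pi : ℂ) * Complex.I)))
      = z * E⁻¹ * (-Complex.I) := by
    rw [← Complex.exp_add, ← Complex.exp_add, ← Complex.exp_add,
      show z + -(z - 1 / 2) * Complex.log z +
          (-z + -(-z - 1 / 2) * (Complex.log z - (Real.pi : ℂ) * Complex.I))
        = Complex.log z + (-((Real.pi : ℂ) * Complex.I * z) + -((Real.pi : ℂ) / 2) * Complex.I)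
        by ring,
      Complex.exp_add, Complex.exp_add, Complex.exp_log hz0, Complex.exp_neg, ← hE, hexpI]
    ring
  -- eliminate sin
  have h4 : (Real.pi : ℂ) * (2 * E)
      = Complex.Gamma z * Complex.Gamma (-z) * (-z) * (1 - E * E) * Complex.I := by
    linear_combination (-(2 * E)) * hG' + Complex.Gamma z * Complex.Gamma (-z) * (-z) * hS
  have hsq : ((Real.sqrt (2 * Real.pi) : ℝ) : ℂ) * ((Real.sqrt (2 * Real.pi) : ℝ) : ℂ)
      = 2 * (Real.pi : ℂ) := by
    rw [← Complex.ofReal_mul, Real.mul_self_sqrt (by positivity)]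
    push_cast; ring
  have hsqne : ((Real.sqrt (2 * Real.pi) : ℝ) : ℂ) ≠ 0 := by
    simp [Real.sqrt_eq_zero', not_le]
    positivity
  unfold Gammastar
  have h2pine : ((Real.sqrt (2 * Real.pi) : ℝ) : ℂ) * ((Real.sqrt (2 * Real.pi) : ℝ) : ℂ) ≠ 0 := by
    rw [hsq]; simp [Real.pi_ne_zero]
  rw [hlog, h2E, div_mul_div_comm, div_mul_eq_mul_div, div_eq_one_iff_eq h2pine, hsq]
  linear_combination (Complex.Gamma z * Complex.Gamma (-z) * (1 - E * E)) * hexp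
    + (-E⁻¹) * h4 + (2 * (Real.pi : ℂ)) * hEinv
end
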